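/- Let v ∈ C²([0,∞)) satisfy v(0) ≠ 0, v′(0) = 0, and the ODE v″(r) + (4/r) v′(r) = v(r) − V(r) v(r) + 2 Q(r) ∫₀^r K(r,s) Q(s) v(s) ds for r > 0, where K(r,s) = (8π²/3) s (1 − s³/r³). Then v has no sign change on [0,∞), and for every 0 < δ < 1 there exist constants C > 0 and R > 0 such that |v(r)| ≥ C e^{δ r} for all r ≥ R; in particular ∫₀^∞ v(r)² r⁴ dr = ∞, so v does not give an element of L²_rad(ℝ⁵). -/

import Mathlib

open MeasureTheory Real

noncomputable section

/-- The kernel `K(r,s) = (8π²/3) s (1 − s³/r³)` from Newton's theorem in 5d. -/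
def Knewton (r s : ℝ) : ℝ := (8 * π ^ 2 / 3) * s * (1 - s ^ 3 / r ^ 3)

def wfun (Qr v : ℝ → ℝ) : ℝ → ℝ := fun r =>
  r ^ 4 * (derivWithin v (Set.Ici 0) r * Qr r - v r * derivWithin Qr (Set.Ici 0) r)

lemma aux_reg {f : ℝ → ℝ} (hf : ContDiffOn ℝ 2 f (Set.Ici 0)) {r : ℝ} (hr : 0 < r) :
    HasDerivAt f (deriv f r) r ∧ HasDerivAt (deriv f) (deriv (deriv f) r) r := by
  have hmem : Set.Ici (0:ℝ) ∈ nhds r := Ici_mem_nhds hr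
  have hat : ContDiffAt ℝ 2 f r := (hf r (le_of_lt hr)).contDiffAt hmem
  obtain ⟨u, hu_nhds, hu⟩ := hat.contDiffOn (le_refl 2) (by simp)
  have hru : r ∈ interior u := mem_interior_iff_mem_nhds.2 hu_nhds
  have hu2 : ContDiffOn ℝ 2 f (interior u) := hu.mono interior_subset
  have hd1 : ContDiffOn ℝ 1 (deriv f) (interior u) :=
    hu2.deriv_of_isOpen isOpen_interior (by norm_num)
  constructor
  · exact ((hu2.differentiableOn (by norm_num)).differentiableAt
      (isOpen_interior.mem_nhds hru)).hasDerivAt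
  · exact ((hd1.differentiableOn (by norm_num)).differentiableAt
      (isOpen_interior.mem_nhds hru)).hasDerivAt

lemma aux_dw {f : ℝ → ℝ} {r : ℝ} (hr : 0 < r) :
    derivWithin f (Set.Ici 0) r = deriv f r :=
  derivWithin_of_mem_nhds (Ici_mem_nhds hr)

lemma wfun_continuousOn {Qr v : ℝ → ℝ} (hQ : ContDiffOn ℝ 2 Qr (Set.Ici 0))
    (hv : ContDiffOn ℝ 2 v (Set.Ici 0)) :
    ContinuousOn (wfun Qr v) (Set.Ici 0) := by
  have h1 := hv.continuousOn_derivWithin (uniqueDiffOn_Ici 0) (by norm_num)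
  have h2 := hQ.continuousOn_derivWithin (uniqueDiffOn_Ici 0) (by norm_num)
  exact (continuousOn_pow 4).mono (Set.subset_univ _) |>.mul
    ((h1.mul hQ.continuousOn).sub (hv.continuousOn.mul h2))

lemma wfun_hasDerivAt {Qr Vr v : ℝ → ℝ}
    (hQsmooth : ContDiffOn ℝ 2 Qr (Set.Ici 0))
    (hQode : ∀ r, 0 < r →
      deriv (deriv Qr) r + (4 / r) * deriv Qr r = Qr r - Vr r * Qr r)
    (hv : ContDiffOn ℝ 2 v (Set.Ici 0))
    (hode : ∀ r, 0 < r →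
      deriv (deriv v) r + (4 / r) * deriv v r =
        v r - Vr r * v r + 2 * Qr r * ∫ s in (0 : ℝ)..r, Knewton r s * Qr s * v s)
    {r : ℝ} (hr : 0 < r) :
    HasDerivAt (wfun Qr v)
      (2 * r ^ 4 * (Qr r) ^ 2 * ∫ s in (0 : ℝ)..r, Knewton r s * Qr s * v s) r := by
  obtain ⟨hv1, hv2⟩ := aux_reg hv hr
  obtain ⟨hQ1, hQ2⟩ := aux_reg hQsmooth hr
  have hrne : r ≠ 0 := ne_of_gt hr
  set I := ∫ s in (0 : ℝ)..r, Knewton r s * Qr s * v s with hI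
  have hg : HasDerivAt (fun x => x ^ 4 * (deriv v x * Qr x - v x * deriv Qr x))
      ((4:ℕ) * r ^ 3 * (deriv v r * Qr r - v r * deriv Qr r) +
        r ^ 4 * ((deriv (deriv v) r * Qr r + deriv v r * deriv Qr r) -
          (deriv v r * deriv Qr r + v r * deriv (deriv Qr) r))) r := by
    exact (hasDerivAt_pow 4 r).mul ((hv2.mul hQ1).sub (hv1.mul hQ2))
  have heq : wfun Qr v =ᶠ[nhds r] fun x => x ^ 4 * (deriv v x * Qr x - v x * deriv Qr x) := by
    filter_upwards [Ioi_mem_nhds hr] with x hx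
    simp [wfun, aux_dw (Set.mem_Ioi.1 hx)]
  have hw : HasDerivAt (wfun Qr v)
      ((4:ℕ) * r ^ 3 * (deriv v r * Qr r - v r * deriv Qr r) +
        r ^ 4 * ((deriv (deriv v) r * Qr r + deriv v r * deriv Qr r) -
          (deriv v r * deriv Qr r + v r * deriv (deriv Qr) r))) r :=
    hg.congr_of_eventuallyEq heq
  convert hw using 1
  have e1 := hode r hr
  have e2 := hQode r hr
  rw [← hI] at e1
  field_simp at e1 e2
  push_cast
  linear_combination (r ^ 3 * v r) * e2 - (r ^ 3 * Qr r) * e1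

lemma Knewton_pos {r s : ℝ} (hs : 0 < s) (hsr : s < r) : 0 < Knewton r s := by
  have hr : 0 < r := hs.trans hsr
  have h3 : s ^ 3 < r ^ 3 := pow_lt_pow_left₀ hsr hs.le (by norm_num)
  have h4 : s ^ 3 / r ^ 3 < 1 := (div_lt_one (by positivity)).2 h3
  have h5 : 0 < 1 - s ^ 3 / r ^ 3 := by linarith
  have hpi : (0:ℝ) < π := Real.pi_pos
  unfold Knewton
  positivity

lemma integral_K_pos {Qr v : ℝ → ℝ}
    (hQc : ContinuousOn Qr (Set.Ici 0)) (hvc : ContinuousOn v (Set.Ici 0))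
    (hQpos : ∀ r, 0 ≤ r → 0 < Qr r)
    {r : ℝ} (hr : 0 < r) (hvpos : ∀ s, 0 ≤ s → s ≤ r → 0 < v s) :
    0 < ∫ s in (0 : ℝ)..r, Knewton r s * Qr s * v s := by
  have hsub : Set.uIcc (0:ℝ) r ⊆ Set.Ici 0 := by
    rw [Set.uIcc_of_le hr.le]; exact fun x hx => hx.1
  have hKc : ContinuousOn (fun s => Knewton r s) (Set.uIcc (0:ℝ) r) := by
    apply Continuous.continuousOn
    unfold Knewton
    have : r ^ 3 ≠ 0 := by positivity
    fun_prop (disch := assumption)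
  have hic : ContinuousOn (fun s => Knewton r s * Qr s * v s) (Set.uIcc (0:ℝ) r) :=
    (hKc.mul (hQc.mono hsub)).mul (hvc.mono hsub)
  apply intervalIntegral.intervalIntegral_pos_of_pos_on
    (hic.intervalIntegrable)
  · intro x hx
    have h1 : 0 < Knewton r x := Knewton_pos hx.1 hx.2
    have h2 : 0 < Qr x := hQpos x hx.1.le
    have h3 : 0 < v x := hvpos x hx.1.le hx.2.le
    positivity
  · exact hr

lemma wfun_strictMono {Qr Vr v : ℝ → ℝ}
    (hQsmooth : ContDiffOn ℝ 2 Qr (Set.Ici 0))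
    (hQpos : ∀ r, 0 ≤ r → 0 < Qr r)
    (hQode : ∀ r, 0 < r →
      deriv (deriv Qr) r + (4 / r) * deriv Qr r = Qr r - Vr r * Qr r)
    (hv : ContDiffOn ℝ 2 v (Set.Ici 0))
    (hode : ∀ r, 0 < r →
      deriv (deriv v) r + (4 / r) * deriv v r =
        v r - Vr r * v r + 2 * Qr r * ∫ s in (0 : ℝ)..r, Knewton r s * Qr s * v s)
    {b : ℝ} (hb : 0 < b) (hvpos : ∀ s, 0 ≤ s → s < b → 0 < v s) :
    StrictMonoOn (wfun Qr v) (Set.Icc 0 b) := by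
  apply strictMonoOn_of_deriv_pos (convex_Icc 0 b)
  · exact (wfun_continuousOn hQsmooth hv).mono (fun x hx => hx.1)
  · intro x hx
    rw [interior_Icc] at hx
    have hx0 : 0 < x := hx.1
    have hd := wfun_hasDerivAt hQsmooth hQode hv hode hx0
    rw [hd.deriv]
    have hIpos : 0 < ∫ s in (0 : ℝ)..x, Knewton x s * Qr s * v s :=
      integral_K_pos hQsmooth.continuousOn hv.continuousOn hQpos hx0
        (fun s hs hsx => hvpos s hs (lt_of_le_of_lt hsx hx.2))
    have := hQpos x hx0.le
    positivity

lemma wfun_zero {Qr v : ℝ → ℝ} : wfun Qr v 0 = 0 := by simp [wfun]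

lemma wfun_pos {Qr Vr v : ℝ → ℝ}
    (hQsmooth : ContDiffOn ℝ 2 Qr (Set.Ici 0))
    (hQpos : ∀ r, 0 ≤ r → 0 < Qr r)
    (hQode : ∀ r, 0 < r →
      deriv (deriv Qr) r + (4 / r) * deriv Qr r = Qr r - Vr r * Qr r)
    (hv : ContDiffOn ℝ 2 v (Set.Ici 0))
    (hode : ∀ r, 0 < r →
      deriv (deriv v) r + (4 / r) * deriv v r =
        v r - Vr r * v r + 2 * Qr r * ∫ s in (0 : ℝ)..r, Knewton r s * Qr s * v s)
    {b : ℝ} (hb : 0 < b) (hvpos : ∀ s, 0 ≤ s → s < b → 0 < v s) :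
    0 < wfun Qr v b := by
  have h := wfun_strictMono hQsmooth hQpos hQode hv hode hb hvpos
    (Set.left_mem_Icc.2 hb.le) (Set.right_mem_Icc.2 hb.le) hb
  rwa [wfun_zero] at h

lemma v_pos {Qr Vr v : ℝ → ℝ}
    (hQsmooth : ContDiffOn ℝ 2 Qr (Set.Ici 0))
    (hQpos : ∀ r, 0 ≤ r → 0 < Qr r)
    (hQode : ∀ r, 0 < r →
      deriv (deriv Qr) r + (4 / r) * deriv Qr r = Qr r - Vr r * Qr r)
    (hv : ContDiffOn ℝ 2 v (Set.Ici 0))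
    (hode : ∀ r, 0 < r →
      deriv (deriv v) r + (4 / r) * deriv v r =
        v r - Vr r * v r + 2 * Qr r * ∫ s in (0 : ℝ)..r, Knewton r s * Qr s * v s)
    (hv0pos : 0 < v 0) :
    ∀ r, 0 ≤ r → 0 < v r := by
  by_contra hcon
  push_neg at hcon
  obtain ⟨z, hz0, hzv⟩ := hcon
  set S : Set ℝ := {r | 0 ≤ r ∧ v r ≤ 0} with hS
  have hSne : S.Nonempty := ⟨z, hz0, hzv⟩
  have hbdd : BddBelow S := ⟨0, fun x hx => hx.1⟩
  have hSclosed : IsClosed S := by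
    have : S = Set.Ici 0 ∩ v ⁻¹' Set.Iic 0 := by
      ext x; simp [hS, Set.mem_setOf_eq, and_comm]
    rw [this]
    exact ContinuousOn.preimage_isClosed_of_isClosed hv.continuousOn
      isClosed_Ici isClosed_Iic
  set r₀ := sInf S with hr₀
  have hr₀S : r₀ ∈ S := hSclosed.csInf_mem hSne hbdd
  have hr₀0 : 0 ≤ r₀ := hr₀S.1
  have hr₀pos : 0 < r₀ := by
    rcases hr₀0.lt_or_eq with h | h
    · exact h
    · exfalso; rw [← h] at hr₀S; linarith [hr₀S.2]
  have hbelow : ∀ s, 0 ≤ s → s < r₀ → 0 < v s := by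
    intro s hs hsr
    by_contra hvs
    push_neg at hvs
    exact absurd (csInf_le hbdd ⟨hs, hvs⟩) (not_le.2 hsr)
  -- v r₀ = 0
  have hvr₀ : v r₀ = 0 := by
    refine le_antisymm hr₀S.2 ?_
    have hc : ContinuousAt v r₀ :=
      (hv.continuousOn.continuousAt (Ici_mem_nhds hr₀pos))
    have htend : Filter.Tendsto v (nhdsWithin r₀ (Set.Iio r₀)) (nhds (v r₀)) :=
      hc.continuousWithinAt.tendsto
    refine ge_of_tendsto htend ?_
    filter_upwards [Ioo_mem_nhdsLT_of_mem ⟨hr₀pos, le_refl r₀⟩] with x hx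
    exact (hbelow x hx.1.le hx.2).le
  -- w r₀ > 0 hence deriv v r₀ > 0
  have hw := wfun_pos hQsmooth hQpos hQode hv hode hr₀pos hbelow
  have hwval : wfun Qr v r₀ = r₀ ^ 4 * (deriv v r₀ * Qr r₀) := by
    simp [wfun, aux_dw hr₀pos, hvr₀]
  rw [hwval] at hw
  have hQr₀ := hQpos r₀ hr₀0
  have hdpos : 0 < deriv v r₀ := by
    by_contra hd
    push_neg at hd
    nlinarith [mul_pos (pow_pos hr₀pos 4) hQr₀, hd, hw]
  -- but deriv v r₀ ≤ 0 by the slope argument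
  have hder : HasDerivAt v (deriv v r₀) r₀ := (aux_reg hv hr₀pos).1
  have hslope := hasDerivAt_iff_tendsto_slope.1 hder
  have hslope' : Filter.Tendsto (slope v r₀) (nhdsWithin r₀ (Set.Iio r₀))
      (nhds (deriv v r₀)) :=
    hslope.mono_left (nhdsWithin_mono r₀ (fun x hx => ne_of_lt hx))
  have hle : deriv v r₀ ≤ 0 := by
    refine le_of_tendsto hslope' ?_
    filter_upwards [Ioo_mem_nhdsLT_of_mem ⟨hr₀pos, le_refl r₀⟩] with x hx
    have hvx := hbelow x hx.1.le hx.2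
    have : slope v r₀ x = v x / (x - r₀) := by
      rw [slope_def_field, hvr₀]; ring_nf
    rw [this]
    exact le_of_lt (div_neg_of_pos_of_neg hvx (by linarith [hx.2]))
  linarith

lemma v_growth {Qr Vr v : ℝ → ℝ}
    (hQsmooth : ContDiffOn ℝ 2 Qr (Set.Ici 0))
    (hQpos : ∀ r, 0 ≤ r → 0 < Qr r)
    (hQode : ∀ r, 0 < r →
      deriv (deriv Qr) r + (4 / r) * deriv Qr r = Qr r - Vr r * Qr r)
    (hQdecay : ∀ ε, 0 < ε → ∃ A, 0 < A ∧ ∃ B, 0 < B ∧ ∀ r, 0 ≤ r →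
      B * Real.exp (-(1 + ε) * r) ≤ Qr r ∧ Qr r ≤ A * Real.exp (-(1 - ε) * r))
    (hv : ContDiffOn ℝ 2 v (Set.Ici 0))
    (hode : ∀ r, 0 < r →
      deriv (deriv v) r + (4 / r) * deriv v r =
        v r - Vr r * v r + 2 * Qr r * ∫ s in (0 : ℝ)..r, Knewton r s * Qr s * v s)
    (hvpos : ∀ r, 0 ≤ r → 0 < v r) :
    ∀ δ : ℝ, 0 < δ → δ < 1 → ∃ C, 0 < C ∧ ∃ R, 0 < R ∧
      ∀ r, R ≤ r → C * Real.exp (δ * r) ≤ v r := by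
  intro δ hδ0 hδ1
  set ε : ℝ := (1 - δ) / 6 with hεdef
  have hε0 : 0 < ε := by rw [hεdef]; linarith
  have hε1 : ε < 1 := by rw [hεdef]; linarith
  obtain ⟨A, hA, B, hB, hAB⟩ := hQdecay ε hε0
  set W₂ : ℝ := wfun Qr v 2 with hW₂def
  have hW₂ : 0 < W₂ := wfun_pos hQsmooth hQpos hQode hv hode (by norm_num)
    (fun s hs _ => hvpos s hs)
  -- monotonicity of wfun
  have hwmono : ∀ r, 2 ≤ r → W₂ ≤ wfun Qr v r := by
    intro r hr
    rcases eq_or_lt_of_le hr with h | h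
    · rw [← h]
    · have hm := wfun_strictMono hQsmooth hQpos hQode hv hode
        (show (0:ℝ) < r by linarith) (fun s hs _ => hvpos s hs)
      exact (hm (Set.mem_Icc.2 ⟨by norm_num, hr⟩)
        (Set.mem_Icc.2 ⟨by linarith, le_refl r⟩) h).le
  set u : ℝ → ℝ := fun x => v x / Qr x with hudef
  set g : ℝ → ℝ := fun x => wfun Qr v x / (x ^ 4 * Qr x ^ 2) with hgdef
  have hu' : ∀ x : ℝ, 0 < x → HasDerivAt u (g x) x := by
    intro x hx
    obtain ⟨hv1, _⟩ := aux_reg hv hx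
    obtain ⟨hQ1, _⟩ := aux_reg hQsmooth hx
    have hQne : Qr x ≠ 0 := (hQpos x hx.le).ne'
    have hd := hv1.div hQ1 hQne
    refine hd.congr_deriv ?_
    rw [hgdef]
    simp only [wfun, aux_dw hx]
    field_simp
  -- lower bound function h
  set hfun : ℝ → ℝ := fun s => (W₂ / A ^ 2) * (Real.exp (2 * (1 - ε) * s) / s ^ 4)
    with hhdef
  have hmain : ∀ r : ℝ, 3 ≤ r →
      (W₂ / A ^ 2) * (Real.exp (2 * (1 - ε) * (r - 1)) / r ^ 4) *
        (B * Real.exp (-(1 + ε) * r)) ≤ v r := by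
    intro r hr3
    have hr0 : (0:ℝ) < r := by linarith
    -- FTC
    have hftc : ∫ s in (2:ℝ)..r, g s = u r - u 2 := by
      apply intervalIntegral.integral_eq_sub_of_hasDerivAt
      · intro x hx
        rw [Set.uIcc_of_le (by linarith : (2:ℝ) ≤ r)] at hx
        exact hu' x (by linarith [hx.1])
      · apply ContinuousOn.intervalIntegrable
        rw [Set.uIcc_of_le (by linarith : (2:ℝ) ≤ r)]
        apply ContinuousOn.div
        · exact (wfun_continuousOn hQsmooth hv).mono
            (fun x hx => by simp at hx ⊢; linarith [hx.1])
        · exact ((continuous_pow 4).continuousOn.mul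
            ((hQsmooth.continuousOn.mono (fun x hx => by simp at hx ⊢; linarith [hx.1])).pow 2))
        · intro x hx
          have hx0 : (0:ℝ) < x := by linarith [hx.1]
          have := hQpos x hx0.le
          positivity
    -- continuity of hfun on [2,r]
    have hhc : ContinuousOn hfun (Set.Icc (2:ℝ) r) := by
      apply ContinuousOn.mul continuousOn_const
      apply ContinuousOn.div
      · exact (Real.continuous_exp.comp (continuous_const.mul continuous_id)).continuousOn
      · exact (continuous_pow 4).continuousOn
      · intro x hx
        have : (0:ℝ) < x := by linarith [hx.1]
        positivity
    have hgc : ContinuousOn g (Set.Icc (2:ℝ) r) := by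
      apply ContinuousOn.div
      · exact (wfun_continuousOn hQsmooth hv).mono
          (fun x hx => by simp at hx ⊢; linarith [hx.1])
      · exact ((continuous_pow 4).continuousOn.mul
          ((hQsmooth.continuousOn.mono (fun x hx => by simp at hx ⊢; linarith [hx.1])).pow 2))
      · intro x hx
        have hx0 : (0:ℝ) < x := by linarith [hx.1]
        have := hQpos x hx0.le
        positivity
    have hint_h : IntervalIntegrable hfun volume 2 r := by
      apply ContinuousOn.intervalIntegrable
      rwa [Set.uIcc_of_le (by linarith : (2:ℝ) ≤ r)]
    have hint_h1 : IntervalIntegrable hfun volume 2 (r-1) := by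
      apply ContinuousOn.intervalIntegrable
      rw [Set.uIcc_of_le (by linarith : (2:ℝ) ≤ r - 1)]
      exact hhc.mono (Set.Icc_subset_Icc le_rfl (by linarith))
    have hint_h2 : IntervalIntegrable hfun volume (r-1) r := by
      apply ContinuousOn.intervalIntegrable
      rw [Set.uIcc_of_le (by linarith : r - 1 ≤ r)]
      exact hhc.mono (Set.Icc_subset_Icc (by linarith) le_rfl)
    have hint_g : IntervalIntegrable g volume 2 r := by
      apply ContinuousOn.intervalIntegrable
      rwa [Set.uIcc_of_le (by linarith : (2:ℝ) ≤ r)]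
    -- pointwise bound hfun ≤ g on [2,r]
    have hg_ge : ∀ s ∈ Set.Icc (2:ℝ) r, hfun s ≤ g s := by
      intro s hs
      have hs0 : (0:ℝ) < s := by linarith [hs.1]
      have hQs := hQpos s hs0.le
      have hwle := hwmono s hs.1
      have hden_pos : 0 < s ^ 4 * Qr s ^ 2 := by positivity
      have hQup := (hAB s hs0.le).2
      have hden_le : s ^ 4 * Qr s ^ 2 ≤ s ^ 4 * (A * Real.exp (-(1 - ε) * s)) ^ 2 := by
        have h4 : (0:ℝ) ≤ s ^ 4 := by positivity
        apply mul_le_mul_of_nonneg_left _ h4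
        exact pow_le_pow_left₀ hQs.le hQup 2
      have heq : hfun s = W₂ / (s ^ 4 * (A * Real.exp (-(1 - ε) * s)) ^ 2) := by
        rw [hhdef]
        have h2 : (A * Real.exp (-(1 - ε) * s)) ^ 2 = A ^ 2 * Real.exp (-(2 * (1 - ε) * s)) := by
          have he : Real.exp (-(1 - ε) * s) ^ (2:ℕ) = Real.exp (-(2 * (1 - ε) * s)) := by
            rw [← Real.exp_nat_mul]
            congr 1
            push_cast
            ring
          rw [mul_pow, he]
        rw [h2, Real.exp_neg]
        have he : Real.exp (2 * (1 - ε) * s) ≠ 0 := Real.exp_ne_zero _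
        have hs4 : (s:ℝ) ^ 4 ≠ 0 := by positivity
        field_simp
      rw [heq, hgdef]
      exact div_le_div₀ (le_trans hW₂.le hwle) hwle hden_pos hden_le
    -- integral comparison
    have h1 : ∫ s in (2:ℝ)..r, hfun s ≤ ∫ s in (2:ℝ)..r, g s :=
      intervalIntegral.integral_mono_on (by linarith) hint_h hint_g hg_ge
    have hsplit : ∫ s in (2:ℝ)..r, hfun s
        = (∫ s in (2:ℝ)..(r-1), hfun s) + ∫ s in (r-1)..r, hfun s :=
      (intervalIntegral.integral_add_adjacent_intervals hint_h1 hint_h2).symm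
    have hnn : 0 ≤ ∫ s in (2:ℝ)..(r-1), hfun s := by
      apply intervalIntegral.integral_nonneg (by linarith)
      intro x hx
      have : (0:ℝ) < x := by linarith [hx.1]
      rw [hhdef]
      positivity
    set m : ℝ := (W₂ / A ^ 2) * (Real.exp (2 * (1 - ε) * (r - 1)) / r ^ 4) with hmdef
    have hm_le : ∀ s ∈ Set.Icc (r-1) r, m ≤ hfun s := by
      intro s hs
      have hs0 : (0:ℝ) < s := by linarith [hs.1]
      rw [hmdef, hhdef]
      apply mul_le_mul_of_nonneg_left _ (by positivity)
      apply div_le_div₀ (by positivity)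
      · apply Real.exp_le_exp.2
        apply mul_le_mul_of_nonneg_left hs.1 (by linarith)
      · positivity
      · exact pow_le_pow_left₀ hs0.le hs.2 4
    have h2 : m ≤ ∫ s in (r-1)..r, hfun s := by
      have hc : ∫ s in (r-1)..r, (fun _ => m) s = m := by
        rw [intervalIntegral.integral_const]
        simp
      rw [← hc]
      exact intervalIntegral.integral_mono_on (by linarith)
        intervalIntegrable_const hint_h2 hm_le
    have hm_ur : m ≤ u r := by
      have hu2 : 0 < u 2 := div_pos (hvpos 2 (by norm_num)) (hQpos 2 (by norm_num))
      have : m ≤ u r - u 2 := by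
        rw [← hftc]
        linarith [h1, hsplit, hnn, h2]
      linarith
    have hvr : v r = u r * Qr r := by
      rw [hudef]
      exact (div_mul_cancel₀ (v r) (hQpos r hr0.le).ne').symm
    have hQlow := (hAB r hr0.le).1
    have hm_pos : 0 < m := by rw [hmdef]; positivity
    have hur_nn : 0 ≤ u r := (div_pos (hvpos r hr0.le) (hQpos r hr0.le)).le
    calc (W₂ / A ^ 2) * (Real.exp (2 * (1 - ε) * (r - 1)) / r ^ 4) *
          (B * Real.exp (-(1 + ε) * r))
        = m * (B * Real.exp (-(1 + ε) * r)) := by rw [hmdef]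
      _ ≤ u r * Qr r := mul_le_mul hm_ur hQlow (by positivity) hur_nn
      _ = v r := hvr.symm
  -- conclude
  set a : ℝ := (1 - δ) / 2 with hadef
  have ha0 : 0 < a := by rw [hadef]; linarith
  refine ⟨W₂ * B / (A ^ 2 * Real.exp (2 * (1 - ε))), by positivity,
    max 3 (3125 / a ^ 5), lt_of_lt_of_le (by norm_num) (le_max_left _ _), ?_⟩
  intro r hr
  have hr3 : (3:ℝ) ≤ r := le_trans (le_max_left _ _) hr
  have hr0 : (0:ℝ) < r := by linarith
  have hra : 3125 / a ^ 5 ≤ r := le_trans (le_max_right _ _) hr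
  -- r^4 ≤ exp (a*r)
  have hexp_ar : r ^ 4 ≤ Real.exp (a * r) := by
    have h5 : Real.exp (a * r) = (Real.exp (a * r / 5)) ^ 5 := by
      rw [← Real.exp_nat_mul]
      congr 1
      push_cast
      ring
    have hle : a * r / 5 ≤ Real.exp (a * r / 5) := by
      linarith [Real.add_one_le_exp (a * r / 5)]
    have hnn : (0:ℝ) ≤ a * r / 5 := by positivity
    have hp : (a * r / 5) ^ 5 ≤ (Real.exp (a * r / 5)) ^ 5 :=
      pow_le_pow_left₀ hnn hle 5
    have hfac : (a * r / 5) ^ 5 = (a ^ 5 * r / 3125) * r ^ 4 := by ring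
    have hge1 : (1:ℝ) ≤ a ^ 5 * r / 3125 := by
      rw [le_div_iff₀ (by norm_num : (0:ℝ) < 3125)]
      rw [div_le_iff₀ (by positivity : (0:ℝ) < a ^ 5)] at hra
      linarith
    calc r ^ 4 = 1 * r ^ 4 := (one_mul _).symm
      _ ≤ (a ^ 5 * r / 3125) * r ^ 4 := by
          apply mul_le_mul_of_nonneg_right hge1 (by positivity)
      _ = (a * r / 5) ^ 5 := hfac.symm
      _ ≤ (Real.exp (a * r / 5)) ^ 5 := hp
      _ = Real.exp (a * r) := h5.symm
  -- key exponential identity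
  set E1 : ℝ := Real.exp (2 * (1 - ε) * (r - 1)) with hE1def
  set E2 : ℝ := Real.exp (-(1 + ε) * r) with hE2def
  set E3 : ℝ := Real.exp (δ * r) with hE3def
  set E4 : ℝ := Real.exp (a * r) with hE4def
  set E5 : ℝ := Real.exp (2 * (1 - ε)) with hE5def
  have hE3p : (0:ℝ) < E3 := by rw [hE3def]; exact Real.exp_pos _
  have hE4p : (0:ℝ) < E4 := by rw [hE4def]; exact Real.exp_pos _
  have hE5p : (0:ℝ) < E5 := by rw [hE5def]; exact Real.exp_pos _
  have hexp : E1 * E2 * E5 = E3 * E4 := by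
    rw [hE1def, hE2def, hE3def, hE4def, hE5def,
      ← Real.exp_add, ← Real.exp_add, ← Real.exp_add]
    congr 1
    rw [hadef, hεdef]
    ring
  have hkey : (W₂ / A ^ 2) * (E1 / r ^ 4) * (B * E2)
      = (W₂ * B / (A ^ 2 * E5)) * E3 * (E4 / r ^ 4) := by
    have hr4 : (r:ℝ) ^ 4 ≠ 0 := by positivity
    have hA2 : (A:ℝ) ^ 2 ≠ 0 := by positivity
    field_simp
    linear_combination hexp
  have hCpos : 0 < (W₂ * B / (A ^ 2 * E5)) * E3 := by positivity
  calc (W₂ * B / (A ^ 2 * E5)) * E3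
      ≤ (W₂ * B / (A ^ 2 * E5)) * E3 * (E4 / r ^ 4) := by
        apply le_mul_of_one_le_right hCpos.le
        rw [le_div_iff₀ (by positivity : (0:ℝ) < r ^ 4)]
        linarith
    _ = (W₂ / A ^ 2) * (E1 / r ^ 4) * (B * E2) := hkey.symm
    _ ≤ v r := hmain r hr3

lemma not_int {g : ℝ → ℝ} {C R : ℝ} (hC : 0 < C) (hR : 0 < R)
    (hg : ∀ r, R ≤ r → C * Real.exp ((1/2 : ℝ) * r) ≤ |g r|) :
    ¬ IntegrableOn (fun r => g r ^ 2 * r ^ 4) (Set.Ioi 0) := by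
  intro hint
  set M : ℝ := max R 1 with hM
  have hM1 : (1:ℝ) ≤ M := le_max_right _ _
  have hMR : R ≤ M := le_max_left _ _
  have hM0 : (0:ℝ) < M := by linarith
  have hint2 : IntegrableOn (fun r => g r ^ 2 * r ^ 4) (Set.Ioi M) :=
    hint.mono_set (Set.Ioi_subset_Ioi hM0.le)
  have hle : ∀ r ∈ Set.Ioi M, C ^ 2 * Real.exp r ≤ g r ^ 2 * r ^ 4 := by
    intro r hr
    rw [Set.mem_Ioi] at hr
    have hrR : R ≤ r := by linarith
    have h1 := hg r hrR
    have h2 : (C * Real.exp ((1/2 : ℝ) * r)) ^ 2 ≤ |g r| ^ 2 :=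
      pow_le_pow_left₀ (by positivity) h1 2
    have h3 : (C * Real.exp ((1/2 : ℝ) * r)) ^ 2 = C ^ 2 * Real.exp r := by
      rw [mul_pow]
      rw [← Real.exp_nat_mul]
      congr 1
      push_cast
      ring
    rw [h3, sq_abs] at h2
    have hr4 : (1:ℝ) ≤ r ^ 4 := one_le_pow₀ (by linarith : (1:ℝ) ≤ r)
    calc C ^ 2 * Real.exp r ≤ g r ^ 2 := h2
      _ = g r ^ 2 * 1 := (mul_one _).symm
      _ ≤ g r ^ 2 * r ^ 4 := by
          apply mul_le_mul_of_nonneg_left hr4 (by positivity)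
  have hexp_int : IntegrableOn (fun r => C ^ 2 * Real.exp r) (Set.Ioi M) := by
    apply Integrable.mono' hint2
    · exact (Continuous.aestronglyMeasurable (by fun_prop)).restrict
    · rw [ae_restrict_iff' measurableSet_Ioi]
      filter_upwards with r hr
      rw [Real.norm_eq_abs, abs_of_nonneg (by positivity)]
      exact hle r hr
  have hone : IntegrableOn (fun _ : ℝ => C ^ 2) (Set.Ioi M) := by
    apply Integrable.mono' hexp_int
    · exact aestronglyMeasurable_const
    · rw [ae_restrict_iff' measurableSet_Ioi]
      filter_upwards with r hr
      rw [Set.mem_Ioi] at hr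
      rw [Real.norm_eq_abs, abs_of_nonneg (by positivity : (0:ℝ) ≤ C ^ 2)]
      have : (1:ℝ) ≤ Real.exp r := by
        rw [← Real.exp_zero]
        exact Real.exp_le_exp.2 (by linarith)
      nlinarith [sq_nonneg C, hC]
  rw [integrableOn_const_iff] at hone
  rcases hone with h | h
  · exact absurd h (by simp [hC.ne'])
  · rw [Real.volume_Ioi] at h
    exact absurd h (by simp)

/-- Solutions of the homogeneous linearized radial ODE `𝓛₊ v = 0` with `v(0) ≠ 0`,
`v′(0) = 0` have no sign change and grow exponentially; in particular they are not
in `L²_rad(ℝ⁵)`.  Here `Qr` is the radial profile of the ground state and `Vr` the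
radial profile of the convolution `|x|⁻³ ∗ Q²`. -/
theorem homogeneous_solutions_grow
    (Qr Vr : ℝ → ℝ)
    (hQsmooth : ContDiffOn ℝ 2 Qr (Set.Ici 0))
    (hQpos : ∀ r, 0 ≤ r → 0 < Qr r)
    (hQmono : ∀ r s, 0 ≤ r → r ≤ s → Qr s ≤ Qr r)
    (hQode : ∀ r, 0 < r →
      deriv (deriv Qr) r + (4 / r) * deriv Qr r = Qr r - Vr r * Qr r)
    (hQdecay : ∀ ε, 0 < ε → ∃ A, 0 < A ∧ ∃ B, 0 < B ∧ ∀ r, 0 ≤ r →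
      B * Real.exp (-(1 + ε) * r) ≤ Qr r ∧ Qr r ≤ A * Real.exp (-(1 - ε) * r))
    (v : ℝ → ℝ)
    (hv : ContDiffOn ℝ 2 v (Set.Ici 0))
    (hv0 : v 0 ≠ 0)
    (hv0' : derivWithin v (Set.Ici 0) 0 = 0)
    (hode : ∀ r, 0 < r →
      deriv (deriv v) r + (4 / r) * deriv v r =
        v r - Vr r * v r + 2 * Qr r * ∫ s in (0 : ℝ)..r, Knewton r s * Qr s * v s) :
    ((∀ r, 0 ≤ r → 0 ≤ v r) ∨ (∀ r, 0 ≤ r → v r ≤ 0)) ∧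
    (∀ δ : ℝ, 0 < δ → δ < 1 → ∃ C, 0 < C ∧ ∃ R, 0 < R ∧
      ∀ r, R ≤ r → C * Real.exp (δ * r) ≤ |v r|) ∧
    ¬ IntegrableOn (fun r => (v r) ^ 2 * r ^ 4) (Set.Ioi 0) := by
  have main : (((∀ r, 0 ≤ r → 0 ≤ v r) ∨ (∀ r, 0 ≤ r → v r ≤ 0)) ∧
      (∀ δ : ℝ, 0 < δ → δ < 1 → ∃ C, 0 < C ∧ ∃ R, 0 < R ∧
        ∀ r, R ≤ r → C * Real.exp (δ * r) ≤ |v r|)) := by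
    rcases hv0.lt_or_gt with hneg | hpos
    · -- v 0 < 0 : apply the positive results to -v
      set v₂ : ℝ → ℝ := fun r => -v r with hv₂def
      have hv₂ : ContDiffOn ℝ 2 v₂ (Set.Ici 0) := hv.neg
      have hdv₂ : deriv v₂ = fun x => -deriv v x := funext fun x => deriv.neg
      have hode₂ : ∀ r, 0 < r →
          deriv (deriv v₂) r + (4 / r) * deriv v₂ r =
            v₂ r - Vr r * v₂ r +
              2 * Qr r * ∫ s in (0 : ℝ)..r, Knewton r s * Qr s * v₂ s := by
        intro r hr
        have h0 := hode r hr
        have h1 : deriv (deriv v₂) r = -deriv (deriv v) r := by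
          rw [hdv₂]; exact deriv.neg
        have h2 : deriv v₂ r = -deriv v r := deriv.neg
        have h3 : (∫ s in (0 : ℝ)..r, Knewton r s * Qr s * v₂ s)
            = -∫ s in (0 : ℝ)..r, Knewton r s * Qr s * v s := by
          rw [← intervalIntegral.integral_neg]
          apply intervalIntegral.integral_congr
          intro s _
          simp [hv₂def]
        rw [h1, h2, h3]
        simp only [hv₂def]
        linarith [h0]
      have hv₂0 : 0 < v₂ 0 := by simp [hv₂def]; linarith
      have hp := v_pos hQsmooth hQpos hQode hv₂ hode₂ hv₂0
      have hgr := v_growth hQsmooth hQpos hQode hQdecay hv₂ hode₂ hp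
      constructor
      · right
        intro r hr
        have := hp r hr
        simp only [hv₂def] at this
        linarith
      · intro δ h1 h2
        obtain ⟨C, hC, R, hR, h⟩ := hgr δ h1 h2
        refine ⟨C, hC, R, hR, fun r hr => (h r hr).trans ?_⟩
        simp only [hv₂def]
        exact neg_le_abs _
    · have hp := v_pos hQsmooth hQpos hQode hv hode hpos
      have hgr := v_growth hQsmooth hQpos hQode hQdecay hv hode hp
      constructor
      · exact Or.inl (fun r hr => (hp r hr).le)
      · intro δ h1 h2
        obtain ⟨C, hC, R, hR, h⟩ := hgr δ h1 h2
        exact ⟨C, hC, R, hR, fun r hr => (h r hr).trans (le_abs_self _)⟩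
  refine ⟨main.1, main.2, ?_⟩
  obtain ⟨C, hC, R, hR, h⟩ := main.2 (1/2) (by norm_num) (by norm_num)
  exact not_int hC hR h
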